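/- The sequence a_n/n! converges to 1/e as n → ∞, where a_n is the number of stabilized-interval-free permutations of {1,…,n}; that is, the asymptotic density of SIF permutations among all permutations is e^{-1}. -/

import Mathlib

/-- A permutation `σ` of `{1,…,n}` (modeled as `Fin n`) is
stabilized-interval-free (SIF) if it stabilizes no proper nonempty
subinterval: there are no `i ≤ j` with `{i,…,j} ≠ [n]` and
`σ({i,…,j}) = {i,…,j}`. -/
def SIF {n : ℕ} (σ : Equiv.Perm (Fin n)) : Prop :=
  ∀ i j : Fin n, i ≤ j → Finset.Icc i j ≠ Finset.univ →
    Finset.image σ (Finset.Icc i j) ≠ Finset.Icc i j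

/-- `a_n`, the number of SIF permutations of `{1,…,n}` (with `a_0 = 1`). -/
noncomputable def sifCount (n : ℕ) : ℕ := Nat.card {σ : Equiv.Perm (Fin n) // SIF σ}

namespace SifAux

open Finset Equiv

lemma choose_aux1 (m : ℕ) : ∀ k, k ≤ m / 2 → ∀ a, a ≤ k → m.choose a ≤ m.choose k := by
  intro k
  induction k with
  | zero => intro _ a ha; interval_cases a; exact le_refl _
  | succ k ih =>
    intro hk a ha
    rcases Nat.eq_or_lt_of_le ha with rfl | h
    · exact le_refl _
    · exact (ih (by omega) a (by omega)).trans (Nat.choose_le_succ_of_lt_half_left (by omega))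

lemma choose_aux {m a k : ℕ} (ha : a ≤ k) (hk : k ≤ m - a) : m.choose a ≤ m.choose k := by
  have hkm : k ≤ m := by omega
  rcases le_or_gt k (m / 2) with h | h
  · exact choose_aux1 m k h a ha
  · rw [← Nat.choose_symm hkm]
    exact choose_aux1 m (m - k) (by omega) a (by omega)

lemma fact_aux {m a k : ℕ} (ha : a ≤ k) (hk : k ≤ m - a) :
    k.factorial * (m - k).factorial ≤ a.factorial * (m - a).factorial := by
  have hkm : k ≤ m := by omega
  have ham : a ≤ m := by omega
  have h1 := Nat.choose_mul_factorial_mul_factorial hkm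
  have h2 := Nat.choose_mul_factorial_mul_factorial ham
  have hpos : 0 < m.choose a := Nat.choose_pos ham
  have key : m.choose a * (k.factorial * (m - k).factorial) ≤
      m.choose a * (a.factorial * (m - a).factorial) := by
    calc m.choose a * (k.factorial * (m - k).factorial)
        ≤ m.choose k * (k.factorial * (m - k).factorial) :=
          Nat.mul_le_mul_right _ (choose_aux ha hk)
      _ = m.factorial := by rw [← h1]; ring
      _ = m.choose a * (a.factorial * (m - a).factorial) := by rw [← h2]; ring
  exact Nat.le_of_mul_le_mul_left key hpos

open scoped Classical in
lemma card_stab {n : ℕ} (s : Finset (Fin n)) :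
    (Finset.univ.filter (fun σ : Equiv.Perm (Fin n) => Finset.image σ s = s)).card ≤
      s.card.factorial * (n - s.card).factorial := by
  classical
  rw [← Fintype.card_subtype]
  have key : ∀ (σ : Perm (Fin n)), Finset.image σ s = s → ∀ x : Fin n, x ∈ s ↔ σ x ∈ s := by
    intro σ h x
    constructor
    · intro hx; rw [← h]; exact Finset.mem_image_of_mem _ hx
    · intro hx; rw [← h] at hx
      obtain ⟨y, hy, hyx⟩ := Finset.mem_image.mp hx
      rwa [← σ.injective hyx]
  set F : {σ : Perm (Fin n) // Finset.image σ s = s} →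
      Perm {x : Fin n // x ∈ s} × Perm {x : Fin n // ¬ x ∈ s} :=
    fun σ => (σ.1.subtypePerm (fun x => (key σ.1 σ.2 x).symm),
      σ.1.subtypePerm (fun x => not_iff_not.mpr (key σ.1 σ.2 x).symm)) with hF
  have hinj : Function.Injective F := by
    intro σ τ h
    rw [Prod.ext_iff] at h
    apply Subtype.ext
    ext x
    by_cases hx : x ∈ s
    · have := congrArg (fun (π : Perm {x : Fin n // x ∈ s}) => (π ⟨x, hx⟩ : Fin n)) h.1
      exact congrArg Fin.val (by simpa [hF] using this)
    · have := congrArg (fun (π : Perm {x : Fin n // ¬ x ∈ s}) => (π ⟨x, hx⟩ : Fin n)) h.2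
      exact congrArg Fin.val (by simpa [hF] using this)
  calc Fintype.card {σ : Perm (Fin n) // Finset.image σ s = s}
      ≤ Fintype.card (Perm {x : Fin n // x ∈ s} × Perm {x : Fin n // ¬ x ∈ s}) :=
        Fintype.card_le_of_injective F hinj
    _ = s.card.factorial * (n - s.card).factorial := by
        rw [Fintype.card_prod, Fintype.card_perm, Fintype.card_perm, Fintype.card_coe,
          Fintype.card_subtype_compl, Fintype.card_fin, Fintype.card_coe]

open scoped Classical in
lemma sifCount_eq (n : ℕ) :
    sifCount n = (Finset.univ.filter (fun σ : Equiv.Perm (Fin n) => SIF σ)).card := by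
  rw [sifCount, Nat.card_eq_fintype_card, Fintype.card_subtype]

open scoped Classical in
lemma numDerangements_eq (n : ℕ) :
    numDerangements n =
      (Finset.univ.filter (fun σ : Equiv.Perm (Fin n) => ∀ x, σ x ≠ x)).card := by
  rw [← card_derangements_fin_eq_numDerangements, ← Fintype.card_subtype]
  apply Fintype.card_congr
  exact Equiv.subtypeEquivRight (fun σ => Iff.rfl)

open scoped Classical in
lemma sif_le_derangements {n : ℕ} (hn : 2 ≤ n) : sifCount n ≤ numDerangements n := by
  rw [sifCount_eq, numDerangements_eq]
  apply Finset.card_le_card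
  intro σ hσ
  simp only [Finset.mem_filter, Finset.mem_univ, true_and] at hσ ⊢
  intro x hx
  have h1 : Finset.Icc x x ≠ Finset.univ := by
    intro h
    have := congrArg Finset.card h
    rw [Finset.Icc_self, Finset.card_singleton, Finset.card_univ, Fintype.card_fin] at this
    omega
  exact hσ x x le_rfl h1 (by rw [Finset.Icc_self, Finset.image_singleton, hx])

open scoped Classical in
lemma derangements_le {n : ℕ} (hn : 6 ≤ n) :
    numDerangements n ≤ sifCount n + (4 * (n - 1).factorial + 6 * n * (n - 2).factorial) := by
  classical
  rw [sifCount_eq, numDerangements_eq]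
  set Dset := Finset.univ.filter (fun σ : Equiv.Perm (Fin n) => ∀ x, σ x ≠ x) with hD
  set Sset := Finset.univ.filter (fun σ : Equiv.Perm (Fin n) => SIF σ) with hS
  set P : Finset (Fin n × Fin n) :=
    Finset.univ.filter (fun p => p.1 < p.2 ∧ Finset.Icc p.1 p.2 ≠ Finset.univ) with hP
  set bad : Fin n × Fin n → Finset (Equiv.Perm (Fin n)) := fun p =>
    Finset.univ.filter (fun σ => Finset.image σ (Finset.Icc p.1 p.2) = Finset.Icc p.1 p.2)
    with hbad
  have hsub : Dset ⊆ Sset ∪ P.biUnion bad := by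
    intro σ hσ
    rw [hD, Finset.mem_filter] at hσ
    by_cases hsif : SIF σ
    · exact Finset.mem_union_left _ (by rw [hS, Finset.mem_filter]; exact ⟨Finset.mem_univ _, hsif⟩)
    · apply Finset.mem_union_right
      rw [SIF] at hsif
      push_neg at hsif
      obtain ⟨i, j, hij, hne, himg⟩ := hsif
      have hlt : i < j := by
        rcases lt_or_eq_of_le hij with h | rfl
        · exact h
        · exfalso
          rw [Finset.Icc_self, Finset.image_singleton, Finset.singleton_inj] at himg
          exact hσ.2 i himg
      rw [Finset.mem_biUnion]
      refine ⟨(i, j), ?_, ?_⟩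
      · rw [hP, Finset.mem_filter]; exact ⟨Finset.mem_univ _, hlt, hne⟩
      · rw [hbad, Finset.mem_filter]; exact ⟨Finset.mem_univ _, himg⟩
  have h2 : Dset.card ≤ Sset.card + ∑ p ∈ P, (bad p).card := by
    calc Dset.card ≤ (Sset ∪ P.biUnion bad).card := Finset.card_le_card hsub
      _ ≤ Sset.card + (P.biUnion bad).card := Finset.card_union_le _ _
      _ ≤ Sset.card + ∑ p ∈ P, (bad p).card :=
          Nat.add_le_add_left (Finset.card_biUnion_le) _
  have h3 : ∑ p ∈ P, (bad p).card ≤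
      ∑ p ∈ P, ((Finset.Icc p.1 p.2).card.factorial *
        (n - (Finset.Icc p.1 p.2).card).factorial) := by
    apply Finset.sum_le_sum
    intro p _
    exact card_stab _
  have hmaps : ∀ p ∈ P, (Finset.Icc p.1 p.2).card ∈ Finset.Icc 2 (n - 1) := by
    intro p hp
    rw [hP, Finset.mem_filter] at hp
    obtain ⟨-, hlt, hne⟩ := hp
    have hc : (Finset.Icc p.1 p.2).card = p.2.val + 1 - p.1.val := Fin.card_Icc ..
    have hv : p.1.val < p.2.val := hlt
    have hv2 : p.2.val < n := p.2.isLt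
    have hcle : (Finset.Icc p.1 p.2).card ≠ n := by
      intro h
      exact hne (Finset.eq_univ_of_card _ (by simp [h]))
    rw [Finset.mem_Icc]
    omega
  have h4 : ∑ p ∈ P, ((Finset.Icc p.1 p.2).card.factorial *
        (n - (Finset.Icc p.1 p.2).card).factorial)
      = ∑ k ∈ Finset.Icc 2 (n - 1), ∑ p ∈ P.filter (fun p => (Finset.Icc p.1 p.2).card = k),
          ((Finset.Icc p.1 p.2).card.factorial * (n - (Finset.Icc p.1 p.2).card).factorial) :=
    (Finset.sum_fiberwise_of_maps_to hmaps _).symm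
  have h5 : ∀ k ∈ Finset.Icc 2 (n - 1),
      ∑ p ∈ P.filter (fun p => (Finset.Icc p.1 p.2).card = k),
          ((Finset.Icc p.1 p.2).card.factorial * (n - (Finset.Icc p.1 p.2).card).factorial)
        ≤ k.factorial * (n + 1 - k).factorial := by
    intro k hk
    rw [Finset.mem_Icc] at hk
    have hsum : ∑ p ∈ P.filter (fun p => (Finset.Icc p.1 p.2).card = k),
          ((Finset.Icc p.1 p.2).card.factorial * (n - (Finset.Icc p.1 p.2).card).factorial)
        = (P.filter (fun p => (Finset.Icc p.1 p.2).card = k)).card *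
            (k.factorial * (n - k).factorial) := by
      calc ∑ p ∈ P.filter (fun p => (Finset.Icc p.1 p.2).card = k),
            ((Finset.Icc p.1 p.2).card.factorial * (n - (Finset.Icc p.1 p.2).card).factorial)
          = ∑ _p ∈ P.filter (fun p => (Finset.Icc p.1 p.2).card = k),
              (k.factorial * (n - k).factorial) :=
            Finset.sum_congr rfl (fun p hp => by rw [(Finset.mem_filter.mp hp).2])
        _ = _ := by rw [Finset.sum_const, smul_eq_mul]
    rw [hsum]
    have hcard : (P.filter (fun p => (Finset.Icc p.1 p.2).card = k)).card ≤ n + 1 - k := by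
      have : (P.filter (fun p => (Finset.Icc p.1 p.2).card = k)).card ≤
          (Finset.range (n + 1 - k)).card := by
        apply Finset.card_le_card_of_injOn (fun p => p.1.val)
        · intro p hp
          rw [Finset.mem_coe, Finset.mem_filter, hP, Finset.mem_filter] at hp
          obtain ⟨⟨-, hlt, -⟩, hc⟩ := hp
          have hcc : (Finset.Icc p.1 p.2).card = p.2.val + 1 - p.1.val := Fin.card_Icc ..
          have hv : p.1.val < p.2.val := hlt
          have hv2 : p.2.val < n := p.2.isLt
          simp only [Finset.coe_range, Set.mem_Iio]
          omega
        · intro p hp q hq hpq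
          simp only [Finset.coe_filter, Set.mem_setOf_eq, hP, Finset.mem_filter] at hp hq
          obtain ⟨⟨-, hlt1, -⟩, hc1⟩ := hp
          obtain ⟨⟨-, hlt2, -⟩, hc2⟩ := hq
          have hcc1 : (Finset.Icc p.1 p.2).card = p.2.val + 1 - p.1.val := Fin.card_Icc ..
          have hcc2 : (Finset.Icc q.1 q.2).card = q.2.val + 1 - q.1.val := Fin.card_Icc ..
          have hv1 : p.1.val < p.2.val := hlt1
          have hv2 : q.1.val < q.2.val := hlt2
          have e1 : p.1.val = q.1.val := hpq
          have e2 : p.2.val = q.2.val := by omega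
          exact Prod.ext (Fin.ext e1) (Fin.ext e2)
      simpa using this
    calc (P.filter (fun p => (Finset.Icc p.1 p.2).card = k)).card *
            (k.factorial * (n - k).factorial)
        ≤ (n + 1 - k) * (k.factorial * (n - k).factorial) :=
          Nat.mul_le_mul_right _ hcard
      _ = k.factorial * ((n + 1 - k) * (n - k).factorial) := by ring
      _ = k.factorial * (n + 1 - k).factorial := by
          congr 1
          have : n + 1 - k = (n - k) + 1 := by omega
          rw [this, Nat.factorial_succ]
  have h6 : ∑ k ∈ Finset.Icc 2 (n - 1), k.factorial * (n + 1 - k).factorial ≤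
      4 * (n - 1).factorial + 6 * n * (n - 2).factorial := by
    have hIcc : Finset.Icc 2 (n - 1) = Finset.Ico 2 n := by
      rw [← Finset.Ico_add_one_right_eq_Icc]
      congr 1
      omega
    rw [hIcc]
    set t : ℕ → ℕ := fun k => k.factorial * (n + 1 - k).factorial with ht
    have split2 : ∑ k ∈ Finset.Ico 3 (n - 1), t k + ∑ k ∈ Finset.Ico (n - 1) n, t k
        = ∑ k ∈ Finset.Ico 3 n, t k :=
      Finset.sum_Ico_consecutive _ (by omega) (by omega)
    have split1 : ∑ k ∈ Finset.Ico 2 3, t k + ∑ k ∈ Finset.Ico 3 n, t k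
        = ∑ k ∈ Finset.Ico 2 n, t k :=
      Finset.sum_Ico_consecutive _ (by omega) (by omega)
    rw [← split1, ← split2]
    have e1 : ∑ k ∈ Finset.Ico 2 3, t k = 2 * (n - 1).factorial := by
      rw [Nat.Ico_succ_singleton, Finset.sum_singleton]
      show Nat.factorial 2 * (n + 1 - 2).factorial = 2 * (n - 1).factorial
      rw [show n + 1 - 2 = n - 1 from by omega]
      norm_num [Nat.factorial]
    have eIco : Finset.Ico (n - 1) n = {n - 1} := by
      have h0 : Finset.Ico (n - 1) ((n - 1) + 1) = {n - 1} := Nat.Ico_succ_singleton _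
      rwa [show (n - 1) + 1 = n from by omega] at h0
    have e2 : ∑ k ∈ Finset.Ico (n - 1) n, t k = 2 * (n - 1).factorial := by
      rw [eIco, Finset.sum_singleton]
      show (n - 1).factorial * (n + 1 - (n - 1)).factorial = 2 * (n - 1).factorial
      rw [show n + 1 - (n - 1) = 2 from by omega, Nat.mul_comm]
      norm_num [Nat.factorial]
    have e3 : ∑ k ∈ Finset.Ico 3 (n - 1), t k ≤ 6 * n * (n - 2).factorial := by
      calc ∑ k ∈ Finset.Ico 3 (n - 1), t k
          ≤ (Finset.Ico 3 (n - 1)).card • (6 * (n - 2).factorial) := by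
            apply Finset.sum_le_card_nsmul
            intro k hk
            rw [Finset.mem_Ico] at hk
            have := fact_aux (m := n + 1) (a := 3) (k := k) hk.1 (by omega)
            have h36 : Nat.factorial 3 = 6 := rfl
            have hnn : n + 1 - 3 = n - 2 := by omega
            rw [hnn, h36] at this
            exact this
        _ = (n - 1 - 3) * (6 * (n - 2).factorial) := by
            rw [Nat.card_Ico, smul_eq_mul]
        _ ≤ n * (6 * (n - 2).factorial) := by
            apply Nat.mul_le_mul_right
            omega
        _ = 6 * n * (n - 2).factorial := by ring
    rw [e1, e2]
    omega
  calc Dset.card ≤ Sset.card + ∑ p ∈ P, (bad p).card := h2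
    _ ≤ Sset.card + ∑ p ∈ P, ((Finset.Icc p.1 p.2).card.factorial *
          (n - (Finset.Icc p.1 p.2).card).factorial) := Nat.add_le_add_left h3 _
    _ = Sset.card + ∑ k ∈ Finset.Icc 2 (n - 1),
          ∑ p ∈ P.filter (fun p => (Finset.Icc p.1 p.2).card = k),
            ((Finset.Icc p.1 p.2).card.factorial *
              (n - (Finset.Icc p.1 p.2).card).factorial) := by rw [h4]
    _ ≤ Sset.card + ∑ k ∈ Finset.Icc 2 (n - 1), k.factorial * (n + 1 - k).factorial :=
        Nat.add_le_add_left (Finset.sum_le_sum h5) _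
    _ ≤ Sset.card + (4 * (n - 1).factorial + 6 * n * (n - 2).factorial) :=
        Nat.add_le_add_left h6 _

lemma Ebound {n : ℕ} (hn : 6 ≤ n) :
    n * (4 * (n - 1).factorial + 6 * n * (n - 2).factorial) ≤ 16 * n.factorial := by
  obtain ⟨m, rfl⟩ : ∃ m, n = m + 2 := ⟨n - 2, by omega⟩
  show (m + 2) * (4 * Nat.factorial (m + 1) + 6 * (m + 2) * Nat.factorial m) ≤
    16 * Nat.factorial (m + 2)
  rw [Nat.factorial_succ (m + 1), Nat.factorial_succ m]
  calc (m + 2) * (4 * ((m + 1) * m.factorial) + 6 * (m + 2) * m.factorial)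
      = (10 * m + 16) * ((m + 2) * m.factorial) := by ring
    _ ≤ (16 * (m + 1)) * ((m + 2) * m.factorial) := Nat.mul_le_mul_right _ (by omega)
    _ = 16 * ((m + 1 + 1) * ((m + 1) * m.factorial)) := by ring

end SifAux

open Filter in
/-- The asymptotic density of SIF permutations among all permutations is
`e⁻¹`: the sequence `a_n/n!` converges to `1/e`. -/
theorem sif_density :
    Tendsto (fun n : ℕ => (sifCount n : ℝ) / n.factorial) atTop
      (nhds (Real.exp 1)⁻¹) := by
  have hD : Tendsto (fun n : ℕ => (numDerangements n : ℝ) / n.factorial) atTop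
      (nhds (Real.exp (-1))) := numDerangements_tendsto_inv_e
  have hzero : Tendsto (fun n : ℕ => (sifCount n : ℝ) / n.factorial -
      (numDerangements n : ℝ) / n.factorial) atTop (nhds 0) := by
    apply squeeze_zero_norm' (a := fun n : ℕ => 16 / (n : ℝ))
    · filter_upwards [eventually_ge_atTop 6] with n hn
      have hfac : (0 : ℝ) < (n.factorial : ℝ) := by
        exact_mod_cast Nat.factorial_pos n
      have hn0 : (0 : ℝ) < (n : ℝ) := by
        have : 0 < n := by omega
        exact_mod_cast this
      have h1 : sifCount n ≤ numDerangements n := SifAux.sif_le_derangements (by omega)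
      have h2 : numDerangements n ≤ sifCount n +
          (4 * (n - 1).factorial + 6 * n * (n - 2).factorial) := SifAux.derangements_le hn
      have h1' : (sifCount n : ℝ) ≤ (numDerangements n : ℝ) := by exact_mod_cast h1
      have hq3 : (sifCount n : ℝ) / n.factorial ≤ (numDerangements n : ℝ) / n.factorial := by
        gcongr
      have hq1 : (numDerangements n : ℝ) / n.factorial ≤
          ((sifCount n : ℝ) + ((4 * (n - 1).factorial + 6 * n * (n - 2).factorial : ℕ) : ℝ))
            / n.factorial := by
        gcongr
        exact_mod_cast h2
      rw [add_div] at hq1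
      have hq2 : (((4 * (n - 1).factorial + 6 * n * (n - 2).factorial : ℕ) : ℝ)) / n.factorial
          ≤ 16 / (n : ℝ) := by
        rw [div_le_div_iff₀ hfac hn0]
        have := SifAux.Ebound hn
        calc ((4 * (n - 1).factorial + 6 * n * (n - 2).factorial : ℕ) : ℝ) * (n : ℝ)
            = ((n * (4 * (n - 1).factorial + 6 * n * (n - 2).factorial) : ℕ) : ℝ) := by
              push_cast; ring
          _ ≤ ((16 * n.factorial : ℕ) : ℝ) := by exact_mod_cast this
          _ = 16 * (n.factorial : ℝ) := by push_cast; ring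
      have hpos : (0 : ℝ) ≤ 16 / (n : ℝ) := by positivity
      rw [Real.norm_eq_abs, abs_le]
      constructor
      · linarith
      · linarith
    · exact tendsto_const_div_atTop_nhds_zero_nat 16
  have key := hzero.add hD
  have hval : (0 : ℝ) + Real.exp (-1) = (Real.exp 1)⁻¹ := by
    rw [zero_add, Real.exp_neg]
  rw [hval] at key
  exact key.congr (fun n => by ring)
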